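/- The group PSL(3,2) (equivalently PSL(2,7)), of order 168, is generated by an element of order 2 and an element of order 3 whose product has order 7. -/

import Mathlib

/-- PSL(3,2): the quotient of SL(3, F₂) by its center. -/
abbrev PSL32 :=
  Matrix.SpecialLinearGroup (Fin 3) (ZMod 2) ⧸
    Subgroup.center (Matrix.SpecialLinearGroup (Fin 3) (ZMod 2))

namespace PSL32Aux

abbrev SL32 := Matrix.SpecialLinearGroup (Fin 3) (ZMod 2)

instance : DecidableEq SL32 := fun x y =>
  decidable_of_iff (x.val = y.val) Subtype.ext_iff.symm

def A : SL32 := ⟨!![0,0,1;0,1,0;1,0,0], by decide⟩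
def B : SL32 := ⟨!![0,1,1;1,0,1;0,1,0], by decide⟩

lemma center_eq_bot : Subgroup.center SL32 = ⊥ := by
  rw [eq_bot_iff]
  intro x hx
  rw [Matrix.SpecialLinearGroup.mem_center_iff] at hx
  obtain ⟨r, hr, hscalar⟩ := hx
  have hr1 : r = 1 := (by decide : ∀ r : ZMod 2, r ^ (Fintype.card (Fin 3)) = 1 → r = 1) r hr
  subst hr1
  rw [Subgroup.mem_bot]
  apply Subtype.ext
  rw [← hscalar]
  simp

/-- The isomorphism `PSL32 ≃* SL32`. -/
noncomputable def e1 : PSL32 ≃* SL32 :=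
  (QuotientGroup.quotientMulEquivOfEq center_eq_bot).trans QuotientGroup.quotientBot

lemma isUnit_eq_one (x : ZMod 2) (h : IsUnit x) : x = 1 := by
  obtain ⟨u, rfl⟩ := h
  revert u; decide

/-- `SL32` is equivalent to `GL (Fin 3) (ZMod 2)` since the only unit of `ZMod 2` is 1. -/
def e2 : SL32 ≃ GL (Fin 3) (ZMod 2) where
  toFun g := Matrix.SpecialLinearGroup.toGL g
  invFun g := ⟨g.val, by
    have h : IsUnit (Matrix.det (g.val : Matrix (Fin 3) (Fin 3) (ZMod 2))) := by
      refine IsUnit.of_mul_eq_one (Matrix.det g.inv) ?_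
      rw [← Matrix.det_mul, g.val_inv, Matrix.det_one]
    exact isUnit_eq_one _ h⟩
  left_inv g := Subtype.ext rfl
  right_inv g := Units.ext rfl

lemma card_SL32 : Nat.card SL32 = 168 := by
  rw [Nat.card_congr e2, Matrix.card_GL_field]
  decide

lemma key_mem : ∀ (M : Matrix (Fin 3) (Fin 3) (ZMod 2)) (h : M.det = 1),
    (⟨M, h⟩ : SL32) ∈ Subgroup.closure ({A, B} : Set SL32) := by
  have hA : A ∈ Subgroup.closure ({A, B} : Set SL32) :=
    Subgroup.subset_closure (Set.mem_insert _ _)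
  have hB : B ∈ Subgroup.closure ({A, B} : Set SL32) :=
    Subgroup.subset_closure (Set.mem_insert_of_mem _ rfl)
  have mem_of_word : ∀ {w : SL32}, w ∈ Subgroup.closure ({A, B} : Set SL32) →
      ∀ {M : Matrix (Fin 3) (Fin 3) (ZMod 2)} (h : M.det = 1),
      M = (w : Matrix (Fin 3) (Fin 3) (ZMod 2)) →
      (⟨M, h⟩ : SL32) ∈ Subgroup.closure ({A, B} : Set SL32) := by
    intro w hw M h hMw
    have : (⟨M, h⟩ : SL32) = w := Subtype.ext hMw
    rw [this]; exact hw
  intro M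
  refine Matrix.diagonal_transvection_induction
    (fun N => ∀ h : N.det = 1, (⟨N, h⟩ : SL32) ∈ Subgroup.closure ({A, B} : Set SL32))
    M ?_ ?_ ?_
  · intro D hD h
    have hD1 : ∀ i, D i = 1 := by
      intro i
      by_contra hne
      have h0 : D i = 0 := (by decide : ∀ d : ZMod 2, d ≠ 1 → d = 0) _ hne
      have : (Matrix.diagonal D).det = 0 := by
        rw [Matrix.det_diagonal]
        exact Finset.prod_eq_zero (Finset.mem_univ i) h0
      rw [h] at this
      exact (by decide : (1 : ZMod 2) ≠ 0) this
    have hD2 : Matrix.diagonal D = 1 := by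
      have : D = fun _ => 1 := funext hD1
      rw [this, Matrix.diagonal_one]
    exact mem_of_word (one_mem _) h hD2
  · rintro ⟨i, j, hij, c⟩ h
    rcases (by decide : ∀ d : ZMod 2, d = 0 ∨ d = 1) c with hc | hc <;> subst hc
    · refine mem_of_word (one_mem _) h ?_
      rw [Matrix.TransvectionStruct.toMatrix_mk]
      simp [Matrix.transvection]
    · fin_cases i <;> fin_cases j <;> (try exact absurd rfl hij)
      -- i=0, j=1 : word "babb"
      · refine mem_of_word (mul_mem (mul_mem (mul_mem hB hA) hB) hB) h ?_
        rw [Matrix.TransvectionStruct.toMatrix_mk]; decide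
      -- i=0, j=2 : word "bababbabab"
      · refine mem_of_word
          (mul_mem (mul_mem (mul_mem (mul_mem (mul_mem (mul_mem (mul_mem (mul_mem
            (mul_mem hB hA) hB) hA) hB) hB) hA) hB) hA) hB) h ?_
        rw [Matrix.TransvectionStruct.toMatrix_mk]; decide
      -- i=1, j=0 : word "abbaba"
      · refine mem_of_word
          (mul_mem (mul_mem (mul_mem (mul_mem (mul_mem hA hB) hB) hA) hB) hA) h ?_
        rw [Matrix.TransvectionStruct.toMatrix_mk]; decide
      -- i=1, j=2 : word "bbab"
      · refine mem_of_word (mul_mem (mul_mem (mul_mem hB hB) hA) hB) h ?_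
        rw [Matrix.TransvectionStruct.toMatrix_mk]; decide
      -- i=2, j=0 : word "abababbababa"
      · refine mem_of_word
          (mul_mem (mul_mem (mul_mem (mul_mem (mul_mem (mul_mem (mul_mem (mul_mem (mul_mem
            (mul_mem (mul_mem hA hB) hA) hB) hA) hB) hB) hA) hB) hA) hB) hA) h ?_
        rw [Matrix.TransvectionStruct.toMatrix_mk]; decide
      -- i=2, j=1 : word "ababba"
      · refine mem_of_word
          (mul_mem (mul_mem (mul_mem (mul_mem (mul_mem hA hB) hA) hB) hB) hA) h ?_
        rw [Matrix.TransvectionStruct.toMatrix_mk]; decide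
  · intro X Y hX hY h
    have hXY : X.det * Y.det = 1 := by rw [← Matrix.det_mul]; exact h
    obtain ⟨h1, h2⟩ := (by decide : ∀ x y : ZMod 2, x * y = 1 → x = 1 ∧ y = 1) _ _ hXY
    exact mul_mem (hX h1) (hY h2)

lemma gen_SL32 : Subgroup.closure ({A, B} : Set SL32) = ⊤ := by
  rw [eq_top_iff]
  intro g _
  exact key_mem g.1 g.2

end PSL32Aux

theorem psl32_is_hurwitz_generated :
    Nat.card PSL32 = 168 ∧
    ∃ a b : PSL32, orderOf a = 2 ∧ orderOf b = 3 ∧ orderOf (a * b) = 7 ∧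
      Subgroup.closure ({a, b} : Set PSL32) = ⊤ := by
  open PSL32Aux in
  refine ⟨?_, e1.symm A, e1.symm B, ?_, ?_, ?_, ?_⟩
  · rw [Nat.card_congr e1.toEquiv, card_SL32]
  · rw [MulEquiv.orderOf_eq]
    haveI : Fact (Nat.Prime 2) := ⟨by norm_num⟩
    exact orderOf_eq_prime (by decide) (by decide)
  · rw [MulEquiv.orderOf_eq]
    haveI : Fact (Nat.Prime 3) := ⟨by norm_num⟩
    exact orderOf_eq_prime (by decide) (by decide)
  · rw [← map_mul, MulEquiv.orderOf_eq]
    haveI : Fact (Nat.Prime 7) := ⟨by norm_num⟩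
    exact orderOf_eq_prime (by decide) (by decide)
  · have himg : ({e1.symm A, e1.symm B} : Set PSL32) = e1.symm '' {A, B} :=
      (Set.image_pair _ _ _).symm
    have hco : (⇑e1.symm '' ({A, B} : Set SL32)) = ⇑e1.symm.toMonoidHom '' {A, B} := by
      simp
    rw [himg, hco, ← MonoidHom.map_closure, gen_SL32]
    exact Subgroup.map_top_of_surjective _ e1.symm.surjective
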